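/- Let N ≥ 2 be an integer and let c = (c_i)_{0≤i≤N} be a nonnegative differentiable solution of the N-truncated non-isolated DGED system on an interval I ⊆ ℝ containing 0. Then the total mass is conserved: ∑_{i=0}^N i c_i(t) = ∑_{i=0}^N i c_i(0) for all t ∈ I. -/

import Mathlib

open Finset

/-- Truncated operator `Q^N_{1,i}`. -/
noncomputable def QN1 (a : ℕ → ℕ → ℕ → ℝ) (N : ℕ) (c : ℕ → ℝ) (i : ℕ) : ℝ :=
  ∑ k ∈ Finset.Icc 1 (N - i), ∑ j ∈ Finset.Icc 0 (N - k), a (i + k) j k * c (i + k) * c j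

/-- Truncated operator `Q^N_{2,i}`. -/
noncomputable def QN2 (a : ℕ → ℕ → ℕ → ℝ) (N : ℕ) (c : ℕ → ℝ) (i : ℕ) : ℝ :=
  -∑ k ∈ Finset.Icc 1 (N - i), ∑ j ∈ Finset.Icc k N, a j i k * c j * c i

/-- Truncated operator `Q^N_{3,i}`. -/
noncomputable def QN3 (a : ℕ → ℕ → ℕ → ℝ) (N : ℕ) (c : ℕ → ℝ) (i : ℕ) : ℝ :=
  ∑ k ∈ Finset.Icc 1 i, ∑ j ∈ Finset.Icc k N, a j (i - k) k * c j * c (i - k)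

/-- Truncated operator `Q^N_{4,i}`. -/
noncomputable def QN4 (a : ℕ → ℕ → ℕ → ℝ) (N : ℕ) (c : ℕ → ℝ) (i : ℕ) : ℝ :=
  -∑ k ∈ Finset.Icc 1 i, ∑ j ∈ Finset.Icc 0 (N - k), a i j k * c j * c i


-- step A: swap sums with bound N - i
lemma swapA (N : ℕ) (f : ℕ → ℕ → ℝ) :
    ∑ i ∈ Finset.range (N+1), ∑ k ∈ Finset.Icc 1 (N - i), f i k
      = ∑ k ∈ Finset.Icc 1 N, ∑ i ∈ Finset.Icc 0 (N - k), f i k := by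
  refine Finset.sum_comm' ?_
  intro i k
  simp only [Finset.mem_range, Finset.mem_Icc, Nat.lt_succ_iff]
  omega

lemma swapB (N : ℕ) (f : ℕ → ℕ → ℝ) :
    ∑ i ∈ Finset.range (N+1), ∑ k ∈ Finset.Icc 1 i, f i k
      = ∑ k ∈ Finset.Icc 1 N, ∑ i ∈ Finset.Icc k N, f i k := by
  refine Finset.sum_comm' ?_
  intro i k
  simp only [Finset.mem_range, Finset.mem_Icc, Nat.lt_succ_iff]
  omega

lemma reidx (N k : ℕ) (hk : k ≤ N) (g : ℕ → ℝ) :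
    ∑ i ∈ Finset.Icc 0 (N - k), g (i + k) = ∑ m ∈ Finset.Icc k N, g m := by
  have : Finset.Icc k N = (Finset.Icc 0 (N - k)).map (addRightEmbedding k) := by
    rw [Finset.map_add_right_Icc, zero_add, Nat.sub_add_cancel hk]
  rw [this, Finset.sum_map]
  rfl

lemma key (a : ℕ → ℕ → ℕ → ℝ) (N : ℕ) (u : ℕ → ℝ) :
    ∑ i ∈ Finset.range (N+1),
      (i:ℝ) * (QN1 a N u i + QN2 a N u i + QN3 a N u i + QN4 a N u i) = 0 := by
  have h1 : ∑ i ∈ Finset.range (N+1), (i:ℝ) * QN1 a N u i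
      = ∑ k ∈ Finset.Icc 1 N, ∑ m ∈ Finset.Icc k N, ∑ j ∈ Finset.Icc 0 (N-k),
          ((m - k : ℕ) : ℝ) * (a m j k * u m * u j) := by
    simp only [QN1, Finset.mul_sum]
    rw [swapA N (fun i k => ∑ j ∈ Finset.Icc 0 (N - k), (i:ℝ) * (a (i+k) j k * u (i+k) * u j))]
    refine Finset.sum_congr rfl fun k hk => ?_
    rw [← reidx N k (Finset.mem_Icc.mp hk).2
      (fun m => ∑ j ∈ Finset.Icc 0 (N-k), ((m - k : ℕ) : ℝ) * (a m j k * u m * u j))]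
    refine Finset.sum_congr rfl fun i _ => ?_
    simp [Nat.add_sub_cancel]
  have h2 : ∑ i ∈ Finset.range (N+1), (i:ℝ) * QN2 a N u i
      = ∑ k ∈ Finset.Icc 1 N, ∑ m ∈ Finset.Icc k N, ∑ j ∈ Finset.Icc 0 (N-k),
          (-(j:ℝ)) * (a m j k * u m * u j) := by
    simp only [QN2, mul_neg, Finset.mul_sum, ← Finset.sum_neg_distrib]
    rw [swapA N (fun i k => ∑ j ∈ Finset.Icc k N, -((i:ℝ) * (a j i k * u j * u i)))]
    refine Finset.sum_congr rfl fun k hk => ?_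
    rw [Finset.sum_comm]
    refine Finset.sum_congr rfl fun m _ => Finset.sum_congr rfl fun j _ => ?_
    ring
  have h3 : ∑ i ∈ Finset.range (N+1), (i:ℝ) * QN3 a N u i
      = ∑ k ∈ Finset.Icc 1 N, ∑ m ∈ Finset.Icc k N, ∑ j ∈ Finset.Icc 0 (N-k),
          ((j:ℝ) + (k:ℝ)) * (a m j k * u m * u j) := by
    simp only [QN3, Finset.mul_sum]
    rw [swapB N (fun i k => ∑ j ∈ Finset.Icc k N, (i:ℝ) * (a j (i-k) k * u j * u (i-k)))]
    refine Finset.sum_congr rfl fun k hk => ?_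
    rw [← reidx N k (Finset.mem_Icc.mp hk).2
      (fun i => ∑ j ∈ Finset.Icc k N, (i:ℝ) * (a j (i-k) k * u j * u (i-k)))]
    rw [Finset.sum_comm]
    refine Finset.sum_congr rfl fun m _ => Finset.sum_congr rfl fun j _ => ?_
    simp [Nat.add_sub_cancel]
  have h4 : ∑ i ∈ Finset.range (N+1), (i:ℝ) * QN4 a N u i
      = ∑ k ∈ Finset.Icc 1 N, ∑ m ∈ Finset.Icc k N, ∑ j ∈ Finset.Icc 0 (N-k),
          (-(m:ℝ)) * (a m j k * u m * u j) := by
    simp only [QN4, mul_neg, Finset.mul_sum, ← Finset.sum_neg_distrib]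
    rw [swapB N (fun i k => ∑ j ∈ Finset.Icc 0 (N-k), -((i:ℝ) * (a i j k * u j * u i)))]
    refine Finset.sum_congr rfl fun k hk => Finset.sum_congr rfl fun m _ =>
      Finset.sum_congr rfl fun j _ => ?_
    ring
  simp only [mul_add, Finset.sum_add_distrib, h1, h2, h3, h4]
  rw [← Finset.sum_add_distrib, ← Finset.sum_add_distrib, ← Finset.sum_add_distrib]
  apply Finset.sum_eq_zero; intro k hk
  rw [← Finset.sum_add_distrib, ← Finset.sum_add_distrib, ← Finset.sum_add_distrib]
  apply Finset.sum_eq_zero; intro m hm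
  rw [← Finset.sum_add_distrib, ← Finset.sum_add_distrib, ← Finset.sum_add_distrib]
  apply Finset.sum_eq_zero; intro j hj
  have hkm : k ≤ m := (Finset.mem_Icc.mp hm).1
  rw [Nat.cast_sub hkm]
  ring

/-- `c` is a solution of the `N`-truncated non-isolated DGED system on the set `I`. -/
def IsTruncSolNon (a : ℕ → ℕ → ℕ → ℝ) (N : ℕ) (I : Set ℝ) (c : ℕ → ℝ → ℝ) : Prop :=
  ∀ t ∈ I,
    HasDerivAt (c 0) 0 t ∧
    (∀ i, 1 ≤ i → i ≤ N - 1 →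
      HasDerivAt (c i)
        (QN1 a N (fun n => c n t) i + QN2 a N (fun n => c n t) i +
          QN3 a N (fun n => c n t) i + QN4 a N (fun n => c n t) i) t) ∧
    HasDerivAt (c N) (QN3 a N (fun n => c n t) N + QN4 a N (fun n => c n t) N) t

/-- Mass conservation for nonnegative solutions of the truncated non-isolated system. -/
theorem truncated_nonisolated_mass_conservation
    (a : ℕ → ℕ → ℕ → ℝ) (ha : ∀ i j k, 0 ≤ a i j k)
    (hzero : ∀ p : ℕ, 1 ≤ p → a p 0 p = 0)
    (N : ℕ) (hN : 2 ≤ N) (I : Set ℝ) (hI : Convex ℝ I) (hI0 : (0 : ℝ) ∈ I)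
    (c : ℕ → ℝ → ℝ) (hc : IsTruncSolNon a N I c)
    (hnn : ∀ i, i ≤ N → ∀ t ∈ I, 0 ≤ c i t)
    (t : ℝ) (ht : t ∈ I) :
    ∑ i ∈ Finset.range (N + 1), (i : ℝ) * c i t
      = ∑ i ∈ Finset.range (N + 1), (i : ℝ) * c i 0 := by
  set f : ℝ → ℝ := fun s => ∑ i ∈ Finset.range (N + 1), (i : ℝ) * c i s with hf
  have hder : ∀ s ∈ I, HasDerivAt f 0 s := by
    intro s hs
    obtain ⟨h0, hmid, hN'⟩ := hc s hs
    have hsum : HasDerivAt f (∑ i ∈ Finset.range (N+1), (i:ℝ) *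
        (QN1 a N (fun n => c n s) i + QN2 a N (fun n => c n s) i +
         QN3 a N (fun n => c n s) i + QN4 a N (fun n => c n s) i)) s := by
      apply HasDerivAt.fun_sum
      intro i hi
      rcases Nat.eq_zero_or_pos i with h | h
      · subst h
        simpa using h0.const_mul (0:ℝ)
      · rcases eq_or_ne i N with hiN | hiN
        · rw [hiN]
          have hQ1 : QN1 a N (fun n => c n s) N = 0 := by
            simp [QN1, Nat.sub_self, Finset.Icc_eq_empty (by omega : ¬ (1:ℕ) ≤ 0)]
          have hQ2 : QN2 a N (fun n => c n s) N = 0 := by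
            simp [QN2, Nat.sub_self, Finset.Icc_eq_empty (by omega : ¬ (1:ℕ) ≤ 0)]
          rw [hQ1, hQ2]
          simpa using hN'.const_mul (N:ℝ)
        · have hle : i ≤ N - 1 := by
            have : i < N + 1 := Finset.mem_range.mp hi; omega
          exact (hmid i h hle).const_mul (i:ℝ)
    rwa [key a N (fun n => c n s)] at hsum
  have hfd : ∀ x ∈ I, HasFDerivWithinAt f (0 : ℝ →L[ℝ] ℝ) I x := by
    intro x hx
    have h0 : (ContinuousLinearMap.smulRight (1 : ℝ →L[ℝ] ℝ) (0:ℝ)) = 0 := by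
      ext y; simp
    exact h0 ▸ (hder x hx).hasFDerivAt.hasFDerivWithinAt
  have h := hI.norm_image_sub_le_of_norm_hasFDerivWithin_le (C := 0) hfd
    (fun x hx => by simp) hI0 ht
  have : f t = f 0 := sub_eq_zero.mp (norm_le_zero_iff.mp (by simpa using h))
  simpa [hf] using this
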